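/- Let l ≥ 0 and let χ be a partial coloring of the linearly ordered set {0, 1, …, 2^l − 1} using colors from a set C (some elements may be uncolored), with the property that for every pair of indices i ≤ j there exists x with i ≤ x ≤ j such that x is colored and its color is assigned to no other colored element y with i ≤ y ≤ j. Then χ uses at least l + 1 distinct colors, i.e., |C| ≥ l + 1 if every color of C actually occurs (equivalently, the number of distinct colors appearing in χ is at least l + 1). -/

import Mathlib

lemma colorset_finite' {C : Type*} (χ : ℕ → Option C) (a b : ℕ) :
    {c : C | ∃ x, a ≤ x ∧ x ≤ b ∧ χ x = some c}.Finite := by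
  have hsub : {c : C | ∃ x, a ≤ x ∧ x ≤ b ∧ χ x = some c}
      ⊆ ⋃ x ∈ Set.Icc a b, {c | χ x = some c} := by
    rintro c ⟨x, hx1, hx2, hx3⟩
    exact Set.mem_biUnion ⟨hx1, hx2⟩ hx3
  refine Set.Finite.subset (Set.Finite.biUnion (Set.finite_Icc a b) ?_) hsub
  intro x _
  apply Set.Subsingleton.finite
  intro c hc d hd
  simp only [Set.mem_setOf_eq] at hc hd
  rw [hc] at hd
  exact Option.some_inj.mp hd

lemma key_lemma' {C : Type*} (χ : ℕ → Option C) :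
    ∀ l a b : ℕ, b + 1 = a + 2 ^ l →
    (∀ i j : ℕ, a ≤ i → i ≤ j → j ≤ b →
      ∃ x, i ≤ x ∧ x ≤ j ∧ (χ x).isSome ∧
        ∀ y, i ≤ y → y ≤ j → χ y = χ x → y = x) →
    l + 1 ≤ {c : C | ∃ x, a ≤ x ∧ x ≤ b ∧ χ x = some c}.ncard := by
  intro l
  induction l with
  | zero =>
    intro a b hb H
    obtain ⟨x, hx1, hx2, hx3, _⟩ := H a b le_rfl (by omega) (by omega)
    obtain ⟨c, hc⟩ := Option.isSome_iff_exists.mp hx3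
    have hmem : c ∈ {c : C | ∃ x, a ≤ x ∧ x ≤ b ∧ χ x = some c} :=
      ⟨x, by omega, by omega, hc⟩
    have := (Set.ncard_pos (colorset_finite' χ a b)).mpr ⟨c, hmem⟩
    omega
  | succ l ih =>
    intro a b hb H
    have h2 : 0 < 2 ^ l := Nat.pow_pos (by norm_num)
    have hps : 2 ^ (l + 1) = 2 ^ l + 2 ^ l := by ring
    obtain ⟨x, hxa, hxb, hxs, hxu⟩ := H a b le_rfl (by omega) le_rfl
    obtain ⟨c, hc⟩ := Option.isSome_iff_exists.mp hxs
    set m := a + 2 ^ l - 1 with hm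
    by_cases hcase : x ≤ m
    · -- use right half [m+1, b]
      have hb' : b + 1 = (m + 1) + 2 ^ l := by omega
      have hle : l + 1 ≤ {c : C | ∃ y, m + 1 ≤ y ∧ y ≤ b ∧ χ y = some c}.ncard := by
        apply ih (m + 1) b hb'
        intro i j hi hij hj
        exact H i j (by omega) hij hj
      set S := {c : C | ∃ y, m + 1 ≤ y ∧ y ≤ b ∧ χ y = some c} with hS
      have hcS : c ∉ S := by
        rintro ⟨y, hy1, hy2, hy3⟩
        have := hxu y (by omega) hy2 (by rw [hy3, hc])
        omega
      have hins : insert c S ⊆ {c : C | ∃ x, a ≤ x ∧ x ≤ b ∧ χ x = some c} := by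
        rintro d (rfl | ⟨y, hy1, hy2, hy3⟩)
        · exact ⟨x, hxa, hxb, hc⟩
        · exact ⟨y, by omega, hy2, hy3⟩
      have hfin := colorset_finite' χ a b
      have h1 : (insert c S).ncard = S.ncard + 1 :=
        Set.ncard_insert_of_notMem hcS (Set.Finite.subset hfin
          (fun d hd => hins (Set.mem_insert_of_mem c hd)))
      have h2' := Set.ncard_le_ncard hins hfin
      omega
    · -- use left half [a, m]
      have hb' : m + 1 = a + 2 ^ l := by omega
      have hle : l + 1 ≤ {c : C | ∃ y, a ≤ y ∧ y ≤ m ∧ χ y = some c}.ncard := by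
        apply ih a m hb'
        intro i j hi hij hj
        exact H i j hi hij (by omega)
      set S := {c : C | ∃ y, a ≤ y ∧ y ≤ m ∧ χ y = some c} with hS
      have hcS : c ∉ S := by
        rintro ⟨y, hy1, hy2, hy3⟩
        have := hxu y hy1 (by omega) (by rw [hy3, hc])
        omega
      have hins : insert c S ⊆ {c : C | ∃ x, a ≤ x ∧ x ≤ b ∧ χ x = some c} := by
        rintro d (rfl | ⟨y, hy1, hy2, hy3⟩)
        · exact ⟨x, hxa, hxb, hc⟩
        · exact ⟨y, hy1, by omega, hy3⟩
      have hfin := colorset_finite' χ a b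
      have h1 : (insert c S).ncard = S.ncard + 1 :=
        Set.ncard_insert_of_notMem hcS (Set.Finite.subset hfin
          (fun d hd => hins (Set.mem_insert_of_mem c hd)))
      have h2' := Set.ncard_le_ncard hins hfin
      omega

theorem stmt1 {C : Type*} (l : ℕ) (χ : Fin (2 ^ l) → Option C)
    (h : ∀ i j : Fin (2 ^ l), i ≤ j →
      ∃ x : Fin (2 ^ l), i ≤ x ∧ x ≤ j ∧ (χ x).isSome ∧
        ∀ y : Fin (2 ^ l), i ≤ y → y ≤ j → χ y = χ x → y = x) :
    l + 1 ≤ {c : C | ∃ x : Fin (2 ^ l), χ x = some c}.ncard := by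
  have h2 : 0 < 2 ^ l := Nat.pow_pos (by norm_num)
  set χ' : ℕ → Option C := fun n => if hn : n < 2 ^ l then χ ⟨n, hn⟩ else none with hχ'
  have hχ'eq : ∀ (n : ℕ) (hn : n < 2 ^ l), χ' n = χ ⟨n, hn⟩ := by
    intro n hn
    simp [hχ', hn]
  have hseteq : {c : C | ∃ x : Fin (2 ^ l), χ x = some c}
      = {c : C | ∃ x, 0 ≤ x ∧ x ≤ 2 ^ l - 1 ∧ χ' x = some c} := by
    ext c
    constructor
    · rintro ⟨x, hx⟩
      refine ⟨x.val, Nat.zero_le _, by omega, ?_⟩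
      rw [hχ'eq x.val x.isLt]
      simpa using hx
    · rintro ⟨x, _, hx2, hx3⟩
      have hxlt : x < 2 ^ l := by omega
      rw [hχ'eq x hxlt] at hx3
      exact ⟨⟨x, hxlt⟩, hx3⟩
  rw [hseteq]
  apply key_lemma' χ' l 0 (2 ^ l - 1) (by omega)
  intro i j hi hij hj
  have hjlt : j < 2 ^ l := by omega
  have hilt : i < 2 ^ l := by omega
  obtain ⟨x, hx1, hx2, hx3, hx4⟩ := h ⟨i, hilt⟩ ⟨j, hjlt⟩ hij
  refine ⟨x.val, hx1, hx2, ?_, ?_⟩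
  · rw [hχ'eq x.val x.isLt]
    simpa using hx3
  · intro y hy1 hy2 hy
    have hylt : y < 2 ^ l := by omega
    rw [hχ'eq y hylt, hχ'eq x.val x.isLt] at hy
    have := hx4 ⟨y, hylt⟩ hy1 hy2 (by simpa using hy)
    exact congrArg Fin.val this
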